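/- Let B₁ > 1, B₂ < 0, S > 0, Q > 0, and define A := S + Q(1−B₂), C := −S + Q(B₁−1), and F(t) := (A·t^{B₁−1} + C·t^{B₂−1})/(B₁ − B₂) for t ≥ 1. Then F(1) = Q, F is strictly increasing on [1, ∞), F(t) → ∞ as t → ∞, and for every L > Q the equation F(t) = L has a unique solution t ∈ (1, ∞). -/

import Mathlib

open Filter Topology

theorem stmt_16 (B1 B2 S Q : ℝ) (hB1 : 1 < B1) (hB2 : B2 < 0) (hS : 0 < S) (hQ : 0 < Q)
    (A C : ℝ) (hA : A = S + Q * (1 - B2)) (hC : C = -S + Q * (B1 - 1))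
    (F : ℝ → ℝ)
    (hF : ∀ t : ℝ, 1 ≤ t → F t = (A * t ^ (B1 - 1) + C * t ^ (B2 - 1)) / (B1 - B2)) :
    F 1 = Q ∧
    StrictMonoOn F (Set.Ici 1) ∧
    Tendsto F atTop atTop ∧
    ∀ L : ℝ, Q < L → ∃! t : ℝ, t ∈ Set.Ioi 1 ∧ F t = L := by
  have hden : 0 < B1 - B2 := by linarith
  have hApos : 0 < A := by rw [hA]; nlinarith
  set G : ℝ → ℝ := fun t => (A * t ^ (B1 - 1) + C * t ^ (B2 - 1)) / (B1 - B2) with hGdef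
  have hFG : Set.EqOn F G (Set.Ici 1) := fun t ht => hF t ht
  -- F 1 = Q
  have hF1 : F 1 = Q := by
    rw [hF 1 le_rfl, Real.one_rpow, Real.one_rpow, hA, hC]
    field_simp
    ring
  -- continuity of G on Ici 1
  have hGcont : ContinuousOn G (Set.Ici 1) := by
    intro x hx
    have hx0 : x ≠ 0 := by
      have : (1:ℝ) ≤ x := hx
      linarith
    have h1 : ContinuousAt (fun t : ℝ => t ^ (B1 - 1)) x :=
      Real.continuousAt_rpow_const x _ (Or.inl hx0)
    have h2 : ContinuousAt (fun t : ℝ => t ^ (B2 - 1)) x :=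
      Real.continuousAt_rpow_const x _ (Or.inl hx0)
    exact ContinuousAt.continuousWithinAt (ContinuousAt.div_const ((h1.const_mul A).add (h2.const_mul C)) _)
  -- derivative of G on Ioi 1
  have hderiv : ∀ x ∈ Set.Ioi (1:ℝ), HasDerivAt G
      ((A * ((B1 - 1) * x ^ (B1 - 1 - 1)) + C * ((B2 - 1) * x ^ (B2 - 1 - 1))) / (B1 - B2)) x := by
    intro x hx
    have hx1 : (1:ℝ) < x := hx
    have hx0 : x ≠ 0 := by linarith
    have h1 : HasDerivAt (fun t : ℝ => t ^ (B1 - 1)) ((B1 - 1) * x ^ (B1 - 1 - 1)) x :=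
      Real.hasDerivAt_rpow_const (Or.inl hx0)
    have h2 : HasDerivAt (fun t : ℝ => t ^ (B2 - 1)) ((B2 - 1) * x ^ (B2 - 1 - 1)) x :=
      Real.hasDerivAt_rpow_const (Or.inl hx0)
    exact ((h1.const_mul A).add (h2.const_mul C)).div_const _
  have hderivpos : ∀ x ∈ Set.Ioi (1:ℝ),
      0 < (A * ((B1 - 1) * x ^ (B1 - 1 - 1)) + C * ((B2 - 1) * x ^ (B2 - 1 - 1))) / (B1 - B2) := by
    intro x hx
    have hx1 : (1:ℝ) < x := hx
    have hx0 : (0:ℝ) < x := by linarith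
    have hv : 0 < x ^ (B2 - 1 - 1) := Real.rpow_pos_of_pos hx0 _
    have huv : x ^ (B2 - 1 - 1) ≤ x ^ (B1 - 1 - 1) :=
      Real.rpow_le_rpow_of_exponent_le hx1.le (by linarith)
    have key : A * (B1 - 1) + C * (B2 - 1) = S * (B1 - B2) := by rw [hA, hC]; ring
    have h1 : A * ((B1 - 1) * x ^ (B2 - 1 - 1)) ≤ A * ((B1 - 1) * x ^ (B1 - 1 - 1)) := by
      have : 0 ≤ A * (B1 - 1) := mul_nonneg hApos.le (by linarith)
      nlinarith
    have h2 : 0 < S * (B1 - B2) * x ^ (B2 - 1 - 1) := by positivity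
    have h3 : A * ((B1 - 1) * x ^ (B2 - 1 - 1)) + C * ((B2 - 1) * x ^ (B2 - 1 - 1))
        = S * (B1 - B2) * x ^ (B2 - 1 - 1) := by
      rw [← key]; ring
    have hnum : 0 < A * ((B1 - 1) * x ^ (B1 - 1 - 1)) + C * ((B2 - 1) * x ^ (B2 - 1 - 1)) := by
      linarith
    positivity
  -- strict monotonicity of G on Ici 1
  have hGmono : StrictMonoOn G (Set.Ici 1) := by
    apply strictMonoOn_of_deriv_pos (convex_Ici 1) hGcont
    intro x hx
    rw [interior_Ici] at hx
    rw [(hderiv x hx).deriv]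
    exact hderivpos x hx
  have hFmono : StrictMonoOn F (Set.Ici 1) := by
    intro a ha b hb hab
    rw [hFG ha, hFG hb]
    exact hGmono ha hb hab
  -- tendsto atTop
  have hGtop : Tendsto G atTop atTop := by
    have h1 : Tendsto (fun t : ℝ => A * t ^ (B1 - 1)) atTop atTop :=
      (tendsto_rpow_atTop (by linarith)).const_mul_atTop hApos
    have h2 : Tendsto (fun t : ℝ => C * t ^ (B2 - 1)) atTop (𝓝 (C * 0)) := by
      have h0 : Tendsto (fun t : ℝ => t ^ (-(1 - B2))) atTop (𝓝 0) :=
        tendsto_rpow_neg_atTop (by linarith)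
      have heq : (fun t : ℝ => t ^ (-(1 - B2))) = fun t : ℝ => t ^ (B2 - 1) := by
        funext t; ring_nf
      rw [heq] at h0
      exact h0.const_mul C
    rw [mul_zero] at h2
    exact (h1.atTop_add h2).atTop_div_const hden
  have hFtop : Tendsto F atTop atTop := by
    apply hGtop.congr'
    filter_upwards [eventually_ge_atTop (1:ℝ)] with t ht
    exact (hF t ht).symm
  refine ⟨hF1, hFmono, hFtop, ?_⟩
  intro L hL
  obtain ⟨t0, ht0L, ht01⟩ : ∃ t0 : ℝ, L < F t0 ∧ 1 < t0 :=
    ((hFtop.eventually (eventually_gt_atTop L)).and (eventually_gt_atTop 1)).exists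
  have hFcont : ContinuousOn F (Set.Icc 1 t0) :=
    (hGcont.mono (Set.Icc_subset_Ici_self)).congr fun x hx => hFG hx.1
  have hIVT := intermediate_value_Ioo ht01.le hFcont
  have hLmem : L ∈ Set.Ioo (F 1) (F t0) := by
    rw [hF1]; exact ⟨hL, ht0L⟩
  obtain ⟨t, htmem, htL⟩ := hIVT hLmem
  refine ⟨t, ⟨htmem.1, htL⟩, ?_⟩
  rintro y ⟨hy1, hyL⟩
  exact hFmono.injOn (Set.mem_Ici.mpr (le_of_lt (Set.mem_Ioi.mp hy1))) (Set.mem_Ici.mpr (le_of_lt (Set.mem_Ioi.mp htmem.1))) (by rw [hyL, htL])
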